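/- For coprime integers a, c (c ≥ 0) and the lattice L = {(a b; c d) ∈ M₂(ℤ) : (N/N') | c} with q(X) = -N'det(X) (N' | N), the plane I¹_{a,c} = span{(a 0; c 0), (0 a; 0 c)} ⊆ L ⊗ ℚ is a 2-dimensional totally isotropic subspace, and the vectors z = (0 a; 0 c) and z̃ = (N/(N'M))·(a 0; c 0), where M = gcd(N/N', c), are primitive isotropic vectors of L. -/

import Mathlib

def memL (N N' : ℕ) (X : Matrix (Fin 2) (Fin 2) ℚ) : Prop :=
  (∃ n : ℤ, X 0 0 = n) ∧ (∃ n : ℤ, X 0 1 = n) ∧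
    (∃ n : ℤ, X 1 0 = ((N : ℚ) / (N' : ℚ)) * n) ∧ (∃ n : ℤ, X 1 1 = n)

def primitiveL (N N' : ℕ) (X : Matrix (Fin 2) (Fin 2) ℚ) : Prop :=
  memL N N' X ∧ ∀ k : ℤ, 1 < k → ∀ W, memL N N' W → k • W ≠ X

theorem stmt12 (N N' : ℕ) (hN : 0 < N) (hN' : 0 < N') (hdvd : N' ∣ N) (a c : ℤ)
    (hcop : Int.gcd a c = 1) (hc : 0 ≤ c) :
    Module.finrank ℚ
        ↥(Submodule.span ℚ ({!![(a : ℚ), 0; (c : ℚ), 0], !![0, (a : ℚ); 0, (c : ℚ)]} :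
          Set (Matrix (Fin 2) (Fin 2) ℚ))) = 2 ∧
    (∀ X ∈ Submodule.span ℚ ({!![(a : ℚ), 0; (c : ℚ), 0], !![0, (a : ℚ); 0, (c : ℚ)]} :
        Set (Matrix (Fin 2) (Fin 2) ℚ)), -(N' : ℚ) * Matrix.det X = 0) ∧
    primitiveL N N' !![0, (a : ℚ); 0, (c : ℚ)] ∧
    -(N' : ℚ) * Matrix.det !![0, (a : ℚ); 0, (c : ℚ)] = 0 ∧
    primitiveL N N'
      !![((N : ℚ) / ((N' : ℚ) * (Nat.gcd (N / N') c.natAbs : ℚ))) * (a : ℚ), 0;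
         ((N : ℚ) / ((N' : ℚ) * (Nat.gcd (N / N') c.natAbs : ℚ))) * (c : ℚ), 0] ∧
    -(N' : ℚ) * Matrix.det
      !![((N : ℚ) / ((N' : ℚ) * (Nat.gcd (N / N') c.natAbs : ℚ))) * (a : ℚ), 0;
         ((N : ℚ) / ((N' : ℚ) * (Nat.gcd (N / N') c.natAbs : ℚ))) * (c : ℚ), 0] = 0 := by
  have hac : ¬(a = 0 ∧ c = 0) := by
    rintro ⟨rfl, rfl⟩; simp [Int.gcd] at hcop
  -- abbreviations
  set e : ℕ := N / N' with he
  set M : ℕ := Nat.gcd e c.natAbs with hM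
  have hepos : 0 < e := Nat.div_pos (Nat.le_of_dvd hN hdvd) hN'
  have hMpos : 0 < M := Nat.gcd_pos_of_pos_left _ hepos
  have hMdvde : M ∣ e := Nat.gcd_dvd_left _ _
  have hcnat : (c.natAbs : ℤ) = c := Int.natAbs_of_nonneg hc
  have hMdvdc : (M : ℤ) ∣ c := by
    rw [← hcnat]; exact_mod_cast Nat.gcd_dvd_right e c.natAbs
  have heQ : ((e : ℕ) : ℚ) = (N : ℚ) / (N' : ℚ) := by
    rw [he, Nat.cast_div hdvd (by exact_mod_cast hN'.ne')]
  -- the key scalar of z̃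
  have hscalar : (N : ℚ) / ((N' : ℚ) * (M : ℚ)) = ((e / M : ℕ) : ℚ) := by
    rw [Nat.cast_div hMdvde (by exact_mod_cast hMpos.ne'), heQ, div_div]
  set v1 : Matrix (Fin 2) (Fin 2) ℚ := !![(a : ℚ), 0; (c : ℚ), 0] with hv1
  set v2 : Matrix (Fin 2) (Fin 2) ℚ := !![0, (a : ℚ); 0, (c : ℚ)] with hv2
  refine ⟨?_, ?_, ?_, ?_, ?_, ?_⟩
  · -- finrank = 2
    have hli : LinearIndependent ℚ ![v1, v2] := by
      rw [LinearIndependent.pair_iff]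
      intro s t hst
      have h00 : s * (a : ℚ) = 0 := by simpa [hv1, hv2] using congrFun (congrFun hst 0) 0
      have h01 : t * (a : ℚ) = 0 := by simpa [hv1, hv2] using congrFun (congrFun hst 0) 1
      have h10 : s * (c : ℚ) = 0 := by simpa [hv1, hv2] using congrFun (congrFun hst 1) 0
      have h11 : t * (c : ℚ) = 0 := by simpa [hv1, hv2] using congrFun (congrFun hst 1) 1
      rcases mul_eq_zero.1 h00 with hs | ha0
      · rcases mul_eq_zero.1 h01 with ht | ha0
        · exact ⟨hs, ht⟩
        · have hc0 : (c : ℚ) ≠ 0 := by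
            intro h; exact hac ⟨by exact_mod_cast ha0, by exact_mod_cast h⟩
          exact ⟨hs, by rcases mul_eq_zero.1 h11 with ht | h; exact ht; exact absurd h hc0⟩
      · have hc0 : (c : ℚ) ≠ 0 := by
          intro h; exact hac ⟨by exact_mod_cast ha0, by exact_mod_cast h⟩
        refine ⟨?_, ?_⟩
        · rcases mul_eq_zero.1 h10 with hs | h; exact hs; exact absurd h hc0
        · rcases mul_eq_zero.1 h11 with ht | h; exact ht; exact absurd h hc0
    have hrange : Set.range ![v1, v2] = {v1, v2} := by
      simp [Matrix.range_cons, Matrix.range_empty, Set.insert_union]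
      exact Set.pair_comm v2 v1
    have := finrank_span_eq_card (R := ℚ) hli
    rw [hrange] at this
    simpa using this
  · -- total isotropy
    intro X hX
    rw [Submodule.mem_span_pair] at hX
    obtain ⟨s, t, rfl⟩ := hX
    have : (s • v1 + t • v2).det = 0 := by
      rw [Matrix.det_fin_two]
      simp [hv1, hv2]
      ring
    rw [this, mul_zero]
  · -- primitivity of z
    constructor
    · exact ⟨⟨0, by simp [hv2]⟩, ⟨a, by simp [hv2]⟩, ⟨0, by simp [hv2]⟩, ⟨c, by simp [hv2]⟩⟩
    · intro k hk W hW hEq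
      obtain ⟨-, ⟨n, hn⟩, -, ⟨m, hm⟩⟩ := hW
      have h1 : (k : ℚ) * W 0 1 = (a : ℚ) := by
        simpa [hv2] using congrFun (congrFun hEq 0) 1
      have h2 : (k : ℚ) * W 1 1 = (c : ℚ) := by
        simpa [hv2] using congrFun (congrFun hEq 1) 1
      rw [hn] at h1; rw [hm] at h2
      have h1' : k * n = a := by exact_mod_cast h1
      have h2' : k * m = c := by exact_mod_cast h2
      have hka : k ∣ a := ⟨n, h1'.symm⟩
      have hkc : k ∣ c := ⟨m, h2'.symm⟩
      have : k ∣ (Int.gcd a c : ℤ) := Int.dvd_coe_gcd hka hkc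
      rw [hcop] at this
      have := Int.le_of_dvd one_pos this
      omega
  · simp [hv2, Matrix.det_fin_two]
  · -- primitivity of z̃
    have hE : ((e / M : ℕ) : ℤ) * M = (e : ℤ) := by
      exact_mod_cast Nat.div_mul_cancel hMdvde
    obtain ⟨e', he'⟩ : ∃ x : ℤ, x = ((e / M : ℕ) : ℤ) := ⟨_, rfl⟩
    obtain ⟨c', hc'⟩ : ∃ x : ℤ, x = c / (M : ℤ) := ⟨_, rfl⟩
    rw [← he'] at hE
    have hc'M : c' * M = c := by rw [hc']; exact Int.ediv_mul_cancel hMdvdc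
    have he'pos : 0 < e' := by
      have : 0 < e / M := Nat.div_pos (Nat.le_of_dvd hepos hMdvde) hMpos
      rw [he']; exact_mod_cast this
    have hcoprime : IsCoprime e' c' := by
      rw [Int.isCoprime_iff_gcd_eq_one]
      have hMgcd : Int.gcd (e : ℤ) c = M := by
        rw [Int.gcd, Int.natAbs_natCast, hM]
      have := Int.gcd_div_gcd_div_gcd (i := (e : ℤ)) (j := c) (by rw [hMgcd]; exact_mod_cast hMpos)
      rw [hMgcd] at this
      have heM : (e : ℤ) / (M : ℤ) = e' :=
        Int.ediv_eq_of_eq_mul_left (by exact_mod_cast hMpos.ne') hE.symm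
      rwa [heM, ← hc'] at this
    have hscalarZ : (N : ℚ) / ((N' : ℚ) * (M : ℚ)) = ((e' : ℤ) : ℚ) := by
      rw [hscalar, he']; exact (Int.cast_natCast _).symm
    constructor
    · refine ⟨⟨e' * a, ?_⟩, ⟨0, by simp⟩, ⟨c', ?_⟩, ⟨0, by simp⟩⟩
      · show ((N : ℚ) / ((N' : ℚ) * (M : ℚ))) * (a : ℚ) = ((e' * a : ℤ) : ℚ)
        rw [hscalarZ]; push_cast; ring
      · show ((N : ℚ) / ((N' : ℚ) * (M : ℚ))) * (c : ℚ) = ((N : ℚ) / (N' : ℚ)) * ((c' : ℤ) : ℚ)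
        rw [hscalarZ, ← heQ]
        have : (e : ℚ) * (c' : ℚ) = (e' : ℚ) * (c : ℚ) := by
          have : (e : ℤ) * c' = e' * c := by
            rw [← hE, ← hc'M]; ring
          exact_mod_cast this
        exact this.symm
    · intro k hk W hW hEq
      obtain ⟨⟨n, hn⟩, -, ⟨m, hm⟩, -⟩ := hW
      have h1 : (k : ℚ) * W 0 0 = ((N : ℚ) / ((N' : ℚ) * (M : ℚ))) * (a : ℚ) := by
        simpa [hv1] using congrFun (congrFun hEq 0) 0
      have h2 : (k : ℚ) * W 1 0 = ((N : ℚ) / ((N' : ℚ) * (M : ℚ))) * (c : ℚ) := by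
        simpa [hv1] using congrFun (congrFun hEq 1) 0
      rw [hn, hscalarZ] at h1
      rw [hm, hscalarZ, ← heQ] at h2
      have h1' : k * n = e' * a := by exact_mod_cast h1
      have h2' : k * ((e : ℤ) * m) = e' * c := by exact_mod_cast h2
      -- from h2' : k * e' * M * m = e' * c' * M, cancel e' * M
      have h2'' : k * m = c' := by
        have hEM : (0 : ℤ) < e' * M := by positivity
        have : (k * m) * (e' * M) = c' * (e' * M) := by
          calc (k * m) * (e' * M) = k * ((e' * M) * m) := by ring
            _ = k * ((e : ℤ) * m) := by rw [hE]
            _ = e' * c := h2'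
            _ = e' * (c' * M) := by rw [hc'M]
            _ = c' * (e' * M) := by ring
        exact mul_right_cancel₀ hEM.ne' this
      have hkc' : k ∣ c' := ⟨m, h2''.symm⟩
      have hke' : IsCoprime k e' := ((hcoprime.of_isCoprime_of_dvd_right hkc').symm)
      have hka : k ∣ a := hke'.dvd_of_dvd_mul_left ⟨n, by linarith [h1']⟩
      have hkc : k ∣ c := hkc'.trans ⟨M, hc'M.symm⟩
      have : k ∣ (Int.gcd a c : ℤ) := Int.dvd_coe_gcd hka hkc
      rw [hcop] at this
      have := Int.le_of_dvd one_pos this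
      omega
  · simp [Matrix.det_fin_two]
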